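/- Let f : ℝ → ℝ be continuously differentiable and 2π-periodic with square-integrable derivative, and θ uniform on [0,2π]. Then for a landscape defined purely on the circle, the two statements are equivalent: (a) Var_θ[f'(θ)] ≤ F implies Var_θ[f(θ + L) − f(θ)] ≤ L² F for all L, and (b) if additionally f satisfies the parameter shift rule f'(θ) = (f(θ+π/2) − f(θ−π/2))/2, then Var_θ[f(θ+π) − f(θ)] ≤ G implies Var_θ[f'(θ)] ≤ G/4. -/

import Mathlib

open MeasureTheory ProbabilityTheory Real

/-- The uniform probability measure on `[0, 2π]`. -/
noncomputable def unifCircle : Measure ℝ :=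
  (ENNReal.ofReal (2 * π))⁻¹ • volume.restrict (Set.Icc 0 (2 * π))

lemma twoPiPos : (0:ℝ) < 2 * π := by positivity

instance : IsProbabilityMeasure unifCircle := by
  constructor
  rw [unifCircle, Measure.smul_apply, Measure.restrict_apply MeasurableSet.univ,
    Set.univ_inter, Real.volume_Icc, sub_zero, smul_eq_mul]
  exact ENNReal.inv_mul_cancel (ENNReal.ofReal_pos.2 twoPiPos).ne' ENNReal.ofReal_ne_top

lemma integral_unif (g : ℝ → ℝ) :
    ∫ x, g x ∂unifCircle = (2 * π)⁻¹ * ∫ x in (0:ℝ)..(2*π), g x := by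
  rw [unifCircle, integral_smul_measure, intervalIntegral.integral_of_le twoPiPos.le,
    ← integral_Icc_eq_integral_Ioc]
  simp [ENNReal.toReal_inv, ENNReal.toReal_ofReal twoPiPos.le, Real.pi_pos.le]

lemma memLp_unif (g : ℝ → ℝ) (hg : Continuous g) (p : ENNReal) : MemLp g p unifCircle := by
  obtain ⟨C, hC⟩ := isCompact_Icc.exists_bound_of_continuousOn
    (s := Set.Icc (0:ℝ) (2*π)) hg.continuousOn
  refine MemLp.of_bound hg.aestronglyMeasurable C ?_
  have h1 : ∀ᵐ x ∂(volume.restrict (Set.Icc (0:ℝ) (2*π))), ‖g x‖ ≤ C := by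
    filter_upwards [ae_restrict_mem measurableSet_Icc] with x hx using hC x hx
  exact Measure.ae_smul_measure h1 _

lemma variance_unif (g : ℝ → ℝ) (hg : Continuous g)
    (h0 : ∫ x in (0:ℝ)..(2*π), g x = 0) :
    variance g unifCircle = (2 * π)⁻¹ * ∫ x in (0:ℝ)..(2*π), (g x)^2 := by
  rw [variance_eq_sub (memLp_unif g hg 2)]
  have h1 : ∫ x, g x ∂unifCircle = 0 := by rw [integral_unif, h0, mul_zero]
  have h2 : (fun x => (g ^ 2) x) = fun x => (g x)^2 := by ext x; simp
  rw [show (unifCircle[g ^ 2] : ℝ) = ∫ x, (g x)^2 ∂unifCircle from by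
    simp [Pi.pow_apply], h1, integral_unif]
  ring

lemma shift_int (g : ℝ → ℝ) (hpg : Function.Periodic g (2*π)) (s : ℝ) :
    ∫ x in (0:ℝ)..(2*π), g (x + s) = ∫ x in (0:ℝ)..(2*π), g x := by
  rw [intervalIntegral.integral_comp_add_right]
  rw [zero_add, add_comm]
  simpa using hpg.intervalIntegral_add_eq s 0

lemma sq_setInt_le (u : ℝ → ℝ) (hu : Continuous u) {a b : ℝ} (hab : a ≤ b) :
    (∫ s in a..b, u s) ^ 2 ≤ (b - a) * ∫ s in a..b, (u s)^2 := by
  set μ : Measure ℝ := volume.restrict (Set.Ioc a b) with hμ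
  haveI : IsFiniteMeasure μ := by
    constructor
    rw [hμ, Measure.restrict_apply MeasurableSet.univ, Set.univ_inter, Real.volume_Ioc]
    exact ENNReal.ofReal_lt_top
  obtain ⟨C, hC⟩ := isCompact_Icc.exists_bound_of_continuousOn
    (s := Set.Icc a b) hu.continuousOn
  have hmem : MemLp u (ENNReal.ofReal 2) μ := by
    refine MemLp.of_bound hu.aestronglyMeasurable C ?_
    filter_upwards [ae_restrict_mem measurableSet_Ioc] with x hx
      using hC x (Set.Ioc_subset_Icc_self hx)
  have hone : MemLp (fun _ : ℝ => (1:ℝ)) (ENNReal.ofReal 2) μ := memLp_const 1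
  have hpq : (2:ℝ).HolderConjugate 2 := ⟨by norm_num, by norm_num, by norm_num⟩
  have key := integral_mul_norm_le_Lp_mul_Lq hpq hmem hone
  have e1 : ∫ x, ‖u x‖ * ‖(1:ℝ)‖ ∂μ = ∫ x, ‖u x‖ ∂μ := by simp
  have e2 : ∫ x, ‖u x‖ ^ (2:ℝ) ∂μ = ∫ x, (u x)^2 ∂μ := by
    refine integral_congr_ae (Filter.Eventually.of_forall fun x => ?_)
    have h := Real.rpow_natCast ‖u x‖ 2
    norm_num at h
    simp [h, Real.norm_eq_abs, sq_abs]
  have e3 : ∫ _x, ‖(1:ℝ)‖ ^ (2:ℝ) ∂μ = b - a := by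
    rw [hμ]
    simp [Real.volume_Ioc, ENNReal.toReal_ofReal (sub_nonneg.2 hab), hab]
  rw [e1, e2, e3] at key
  have h4 : |∫ x, u x ∂μ| ≤ ∫ x, ‖u x‖ ∂μ := by
    simpa [Real.norm_eq_abs] using norm_integral_le_integral_norm (μ := μ) u
  have hI : 0 ≤ ∫ x, (u x)^2 ∂μ := integral_nonneg fun x => sq_nonneg _
  have hba : (0:ℝ) ≤ b - a := sub_nonneg.2 hab
  have hsq : ∀ c : ℝ, 0 ≤ c → (c ^ ((1:ℝ)/2)) ^ 2 = c := by
    intro c hc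
    rw [← Real.rpow_natCast (c ^ ((1:ℝ)/2)) 2, ← Real.rpow_mul hc]
    norm_num
  calc (∫ s in a..b, u s) ^ 2 = |∫ x, u x ∂μ| ^ 2 := by
        rw [intervalIntegral.integral_of_le hab, sq_abs]
    _ ≤ ((∫ x, (u x)^2 ∂μ) ^ ((1:ℝ)/2) * (b - a) ^ ((1:ℝ)/2)) ^ 2 :=
        pow_le_pow_left₀ (abs_nonneg _) (h4.trans key) 2
    _ = (b - a) * ∫ x, (u x)^2 ∂μ := by
        rw [mul_pow, hsq _ hI, hsq _ hba]; ring
    _ = (b - a) * ∫ s in a..b, (u s)^2 := by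
        rw [intervalIntegral.integral_of_le hab]

lemma sq_int_le (u : ℝ → ℝ) (hu : Continuous u) (L : ℝ) :
    (∫ s in (0:ℝ)..L, u s) ^ 2 ≤ L * ∫ s in (0:ℝ)..L, (u s)^2 := by
  rcases le_or_gt 0 L with hL | hL
  · simpa using sq_setInt_le u hu hL
  · have h := sq_setInt_le u hu hL.le
    rw [intervalIntegral.integral_symm L 0, intervalIntegral.integral_symm L 0]
    nlinarith [h]

lemma fubini_shift_aux (w : ℝ → ℝ) (hw : Continuous w) (hpw : Function.Periodic w (2*π))
    {a b : ℝ} (hab : a ≤ b) :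
    ∫ θ in (0:ℝ)..(2*π), (∫ s in a..b, w (θ + s)) =
      (b - a) * ∫ x in (0:ℝ)..(2*π), w x := by
  have hc : Continuous (Function.uncurry fun θ s : ℝ => w (θ + s)) :=
    hw.comp (continuous_fst.add continuous_snd)
  have hint : Integrable (Function.uncurry fun θ s => w (θ + s))
      ((volume.restrict (Set.Ioc (0:ℝ) (2*π))).prod (volume.restrict (Set.Ioc a b))) := by
    rw [Measure.prod_restrict]
    have h1 : IntegrableOn (Function.uncurry fun θ s : ℝ => w (θ + s))
        (Set.Icc (0:ℝ) (2*π) ×ˢ Set.Icc a b) volume :=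
      hc.continuousOn.integrableOn_compact (isCompact_Icc.prod isCompact_Icc)
    rw [Measure.volume_eq_prod] at h1
    exact h1.mono_set (Set.prod_mono Set.Ioc_subset_Icc_self Set.Ioc_subset_Icc_self)
  have swap := MeasureTheory.integral_integral_swap hint
  simp only [intervalIntegral.integral_of_le hab, intervalIntegral.integral_of_le twoPiPos.le]
  rw [swap]
  have hinner : ∀ s : ℝ, (∫ θ in Set.Ioc (0:ℝ) (2*π), w (θ + s)) =
      ∫ x in Set.Ioc (0:ℝ) (2*π), w x := by
    intro s
    rw [← intervalIntegral.integral_of_le twoPiPos.le, ← intervalIntegral.integral_of_le twoPiPos.le]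
    exact shift_int w hpw s
  rw [integral_congr_ae (Filter.Eventually.of_forall hinner)]
  rw [setIntegral_const, Real.volume_real_Ioc_of_le hab, smul_eq_mul]

lemma fubini_shift (w : ℝ → ℝ) (hw : Continuous w) (hpw : Function.Periodic w (2*π))
    (L : ℝ) :
    ∫ θ in (0:ℝ)..(2*π), (∫ s in (0:ℝ)..L, w (θ + s)) =
      L * ∫ x in (0:ℝ)..(2*π), w x := by
  rcases le_or_gt 0 L with hL | hL
  · simpa using fubini_shift_aux w hw hpw hL
  · have h := fubini_shift_aux w hw hpw hL.le
    have e : ∀ θ : ℝ, (∫ s in (0:ℝ)..L, w (θ + s)) = -∫ s in L..(0:ℝ), w (θ + s) :=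
      fun θ => intervalIntegral.integral_symm L 0
    simp only [e]
    rw [intervalIntegral.integral_neg, h]
    ring

lemma cont_sliding (w : ℝ → ℝ) (hw : Continuous w) (L : ℝ) :
    Continuous (fun θ => ∫ s in (0:ℝ)..L, w (θ + s)) := by
  have h1 : ∀ θ : ℝ, (∫ s in (0:ℝ)..L, w (θ + s)) =
      (∫ x in (0:ℝ)..(θ + L), w x) - ∫ x in (0:ℝ)..θ, w x := by
    intro θ
    rw [intervalIntegral.integral_comp_add_left, add_zero]
    have := intervalIntegral.integral_add_adjacent_intervals (a := (0:ℝ)) (b := θ)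
      (c := θ + L) (μ := volume) (hw.intervalIntegrable _ _) (hw.intervalIntegrable _ _)
    linarith [this]
  simp only [h1]
  have hG : Continuous (fun y : ℝ => ∫ x in (0:ℝ)..y, w x) :=
    intervalIntegral.continuous_primitive (μ := volume) (fun a b => hw.intervalIntegrable a b) 0
  exact (hG.comp (continuous_id.add continuous_const)).sub hG

/-- One-dimensional equivalence of barren plateaus and cost concentration on the circle:
(a) a bound `F` on the variance of the derivative yields the bound `L² F` on the variance of
every finite difference of step `L`; (b) conversely, if the parameter shift rule holds, a
bound `G` on the variance of the difference of step `π` yields the bound `G/4` on the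
variance of the derivative. -/
theorem circle_bp_iff_concentration
    (f : ℝ → ℝ) (hf : ContDiff ℝ 1 f) (hper : Function.Periodic f (2 * π))
    (hL2 : MemLp (deriv f) 2 unifCircle) :
    (∀ F : ℝ, 0 ≤ F → variance (deriv f) unifCircle ≤ F →
      ∀ L : ℝ, variance (fun θ => f (θ + L) - f θ) unifCircle ≤ L ^ 2 * F) ∧
    ((∀ θ : ℝ, deriv f θ = (f (θ + π / 2) - f (θ - π / 2)) / 2) →
      ∀ G : ℝ, variance (fun θ => f (θ + π) - f θ) unifCircle ≤ G →
        variance (deriv f) unifCircle ≤ G / 4) := by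
  have hfc : Continuous f := hf.continuous
  have hf' : Continuous (deriv f) := hf.continuous_deriv le_rfl
  have hper' : Function.Periodic (deriv f) (2*π) := by
    intro x
    have h1 : deriv (fun y => f (y + 2*π)) x = deriv f (x + 2*π) :=
      deriv_comp_add_const f (2*π) x
    have h2 : (fun y => f (y + 2*π)) = f := funext fun y => hper y
    rw [← h1, h2]
  have hpersq : Function.Periodic (fun x => (deriv f x)^2) (2*π) := fun x => by
    simp [hper' x]
  have hFTC : ∀ a b : ℝ, ∫ x in a..b, deriv f x = f b - f a := fun a b =>
    intervalIntegral.integral_deriv_eq_sub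
      (fun x _ => (hf.differentiable one_ne_zero).differentiableAt)
      (hf'.intervalIntegrable _ _)
  have hmean' : ∫ x in (0:ℝ)..(2*π), deriv f x = 0 := by
    rw [hFTC]
    have h := hper 0
    rw [zero_add] at h
    rw [h, sub_self]
  have hvar' : variance (deriv f) unifCircle
      = (2*π)⁻¹ * ∫ x in (0:ℝ)..(2*π), (deriv f x)^2 := variance_unif _ hf' hmean'
  have hg_cont : ∀ L : ℝ, Continuous (fun θ => f (θ + L) - f θ) := fun L =>
    (hfc.comp (continuous_id.add continuous_const)).sub hfc
  have hg_mean : ∀ L : ℝ, ∫ θ in (0:ℝ)..(2*π), (f (θ + L) - f θ) = 0 := by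
    intro L
    have hi1 : IntervalIntegrable (fun θ : ℝ => f (θ + L)) volume 0 (2*π) := by
      apply Continuous.intervalIntegrable
      fun_prop
    rw [intervalIntegral.integral_sub hi1
      (hfc.intervalIntegrable _ _), shift_int f hper L, sub_self]
  have hg_var : ∀ L : ℝ, variance (fun θ => f (θ + L) - f θ) unifCircle
      = (2*π)⁻¹ * ∫ θ in (0:ℝ)..(2*π), (f (θ + L) - f θ)^2 :=
    fun L => variance_unif _ (hg_cont L) (hg_mean L)
  have hnn : 0 ≤ ∫ x in (0:ℝ)..(2*π), (deriv f x)^2 :=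
    intervalIntegral.integral_nonneg twoPiPos.le (fun x _ => sq_nonneg _)
  constructor
  · intro F hF hVF L
    have hrep : ∀ θ : ℝ, f (θ + L) - f θ = ∫ s in (0:ℝ)..L, deriv f (θ + s) := by
      intro θ
      rw [intervalIntegral.integral_comp_add_left, add_zero, hFTC]
    have hpt : ∀ θ ∈ Set.Icc (0:ℝ) (2*π), (f (θ + L) - f θ)^2
        ≤ L * ∫ s in (0:ℝ)..L, (deriv f (θ + s))^2 := by
      intro θ _
      rw [hrep θ]
      exact sq_int_le (fun s => deriv f (θ + s))
        (hf'.comp (continuous_const.add continuous_id)) L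
    have hint1 : IntervalIntegrable (fun θ => (f (θ + L) - f θ)^2) volume 0 (2*π) :=
      ((hg_cont L).pow 2).intervalIntegrable _ _
    have hint2 : IntervalIntegrable
        (fun θ => L * ∫ s in (0:ℝ)..L, (deriv f (θ + s))^2) volume 0 (2*π) :=
      (continuous_const.mul (cont_sliding (fun x => (deriv f x)^2) (hf'.pow 2) L)).intervalIntegrable _ _
    have hmono := intervalIntegral.integral_mono_on twoPiPos.le hint1 hint2 hpt
    have hfub : (∫ θ in (0:ℝ)..(2*π), L * ∫ s in (0:ℝ)..L, (deriv f (θ + s))^2)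
        = L^2 * ∫ x in (0:ℝ)..(2*π), (deriv f x)^2 := by
      rw [intervalIntegral.integral_const_mul,
        fubini_shift (fun x => (deriv f x)^2) (hf'.pow 2) hpersq L]
      ring
    have hvf' : (2*π)⁻¹ * ∫ x in (0:ℝ)..(2*π), (deriv f x)^2 ≤ F := hvar' ▸ hVF
    have hinv : (0:ℝ) ≤ (2*π)⁻¹ := by positivity
    calc variance (fun θ => f (θ + L) - f θ) unifCircle
        = (2*π)⁻¹ * ∫ θ in (0:ℝ)..(2*π), (f (θ + L) - f θ)^2 := hg_var L
      _ ≤ (2*π)⁻¹ * (L^2 * ∫ x in (0:ℝ)..(2*π), (deriv f x)^2) := by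
          apply mul_le_mul_of_nonneg_left _ hinv
          rw [← hfub]; exact hmono
      _ = L^2 * ((2*π)⁻¹ * ∫ x in (0:ℝ)..(2*π), (deriv f x)^2) := by ring
      _ ≤ L^2 * F := mul_le_mul_of_nonneg_left hvf' (sq_nonneg L)
  · intro hpsr G hVG
    have hkey : ∀ θ : ℝ, f (θ + π) - f θ = 2 * deriv f (θ + π/2) := by
      intro θ
      have h := hpsr (θ + π/2)
      have e1 : θ + π/2 + π/2 = θ + π := by ring
      have e2 : θ + π/2 - π/2 = θ := by ring
      rw [e1, e2] at h
      linarith [h]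
    have h4 : variance (fun θ => f (θ + π) - f θ) unifCircle
        = 4 * variance (deriv f) unifCircle := by
      rw [hg_var π, hvar']
      have hsq : ∀ θ : ℝ, (f (θ + π) - f θ)^2 = 4 * (deriv f (θ + π/2))^2 := fun θ => by
        rw [hkey θ]; ring
      simp only [hsq]
      rw [intervalIntegral.integral_const_mul,
        shift_int (fun x => (deriv f x)^2) hpersq (π/2)]
      ring
    linarith [hVG, h4.symm.le]
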